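/- For every finite set S of points in R^d (d ≥ 1), there exists δ > 0 with the following property: for every affine function f : R^d → R of the form f(x) = ⟨a, x⟩ + b with a ≠ 0 (defining the hyperplane H = f⁻¹({0})), there exists an affine function g : R^d → R of the form g(x) = ⟨a′, x⟩ + b′ with a′ ≠ 0 such that (i) every s ∈ S whose distance to H is at most δ satisfies g(s) = 0, and (ii) every s ∈ S satisfies f(s)·g(s) ≥ 0 (so no site lies in the interior of the double wedge bounded by H and g⁻¹({0}), i.e., the two hyperplanes are combinatorially equivalent). -/

import Mathlib

open scoped RealInnerProductSpace


noncomputable def evL {d : ℕ} (s : EuclideanSpace ℝ (Fin d)) :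
    (EuclideanSpace ℝ (Fin d) × ℝ) →ₗ[ℝ] ℝ where
  toFun p := ⟪p.1, s⟫ + p.2
  map_add' p q := by simp [inner_add_left]; ring
  map_smul' c p := by simp [real_inner_smul_left, Finset.mul_sum, mul_assoc, mul_add]

lemma evL_apply' {d : ℕ} (s : EuclideanSpace ℝ (Fin d)) (p : EuclideanSpace ℝ (Fin d) × ℝ) :
    evL s p = ⟪p.1, s⟫ + p.2 := rfl

-- Lemma A: interpolation with bounded constant
lemma interp {d : ℕ} (S T : Finset (EuclideanSpace ℝ (Fin d))) :
    ∃ C : ℝ, 1 ≤ C ∧ ∀ M : ℝ, 0 ≤ M → ∀ p : EuclideanSpace ℝ (Fin d) × ℝ,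
      (∀ t ∈ T, |evL t p| ≤ M) →
      ∃ q : EuclideanSpace ℝ (Fin d) × ℝ,
        (∀ t ∈ T, evL t q = evL t p) ∧ ∀ s ∈ S, |evL s q| ≤ C * M := by
  classical
  set ρ : (EuclideanSpace ℝ (Fin d) × ℝ) →ₗ[ℝ] (↥T → ℝ) :=
    LinearMap.pi (fun t => evL (t : EuclideanSpace ℝ (Fin d))) with hρ
  obtain ⟨σ, hσ⟩ := LinearMap.exists_rightInverse_of_surjective ρ.rangeRestrict
    (LinearMap.range_rangeRestrict ρ)
  -- ψ s : functional on range ρ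
  set ψ : EuclideanSpace ℝ (Fin d) → (↥(LinearMap.range ρ) →L[ℝ] ℝ) :=
    fun s => LinearMap.toContinuousLinearMap ((evL s).comp σ) with hψ
  set C : ℝ := 1 + ∑ s ∈ S, ‖ψ s‖ with hC
  have hC1 : 1 ≤ C := by
    have : (0:ℝ) ≤ ∑ s ∈ S, ‖ψ s‖ := Finset.sum_nonneg fun s _ => ContinuousLinearMap.opNorm_nonneg _
    simp [hC]; linarith
  refine ⟨C, hC1, fun M hM p hp => ?_⟩
  refine ⟨σ (ρ.rangeRestrict p), fun t ht => ?_, fun s hs => ?_⟩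
  · have h1 : ρ.rangeRestrict (σ (ρ.rangeRestrict p)) = ρ.rangeRestrict p := by
      rw [← LinearMap.comp_apply, hσ]; rfl
    have h2 : ρ (σ (ρ.rangeRestrict p)) = ρ p := by
      have := congrArg (Subtype.val) h1
      simpa using this
    exact congrFun h2 ⟨t, ht⟩
  · have hnorm : ‖ρ.rangeRestrict p‖ ≤ M := by
      show ‖(ρ.rangeRestrict p : ↥T → ℝ)‖ ≤ M
      rw [pi_norm_le_iff_of_nonneg hM]
      intro t
      simpa [hρ] using hp t t.2
    have h3 : |evL s (σ (ρ.rangeRestrict p))| = ‖ψ s (ρ.rangeRestrict p)‖ := by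
      simp [hψ, LinearMap.coe_toContinuousLinearMap']
    rw [h3]
    calc ‖ψ s (ρ.rangeRestrict p)‖ ≤ ‖ψ s‖ * ‖ρ.rangeRestrict p‖ :=
          (ψ s).le_opNorm _
      _ ≤ ‖ψ s‖ * M := by
          exact mul_le_mul_of_nonneg_left hnorm (ContinuousLinearMap.opNorm_nonneg _)
      _ ≤ C * M := by
          refine mul_le_mul_of_nonneg_right ?_ hM
          have : ‖ψ s‖ ≤ ∑ s ∈ S, ‖ψ s‖ :=
            Finset.single_le_sum (fun s _ => ContinuousLinearMap.opNorm_nonneg (ψ s)) hs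
          linarith

lemma nontrivialE {d : ℕ} (hd : 1 ≤ d) : Nontrivial (EuclideanSpace ℝ (Fin d)) := by
  haveI : Nonempty (Fin d) := ⟨⟨0, hd⟩⟩
  exact inferInstance

-- Lemma B
lemma spanning_bound {d : ℕ} (hd : 1 ≤ d) (T : Finset (EuclideanSpace ℝ (Fin d))) :
    ∃ ε : ℝ, 0 < ε ∧ (affineSpan ℝ (↑T : Set (EuclideanSpace ℝ (Fin d))) = ⊤ →
      ∀ p : EuclideanSpace ℝ (Fin d) × ℝ, ‖p.1‖ = 1 → ∃ t ∈ T, ε ≤ |evL t p|) := by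
  classical
  haveI := nontrivialE hd
  by_cases hsp : affineSpan ℝ (↑T : Set (EuclideanSpace ℝ (Fin d))) = ⊤
  swap
  · exact ⟨1, one_pos, fun h => absurd h hsp⟩
  have hTne : T.Nonempty := by
    rcases T.eq_empty_or_nonempty with h | h
    · exfalso; rw [h] at hsp; simp at hsp
    · exact h
  set Φ : (EuclideanSpace ℝ (Fin d) × ℝ) →ₗ[ℝ] (↥T → ℝ) :=
    LinearMap.pi (fun t => evL (t : EuclideanSpace ℝ (Fin d))) with hΦ
  have hinj : Function.Injective Φ := by
    rw [← LinearMap.ker_eq_bot]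
    rw [Submodule.eq_bot_iff]
    intro p hp
    have hzero : ∀ t ∈ T, evL t p = 0 := by
      intro t ht
      have : Φ p = 0 := hp
      exact congrFun this ⟨t, ht⟩
    have hvs : vectorSpan ℝ (↑T : Set (EuclideanSpace ℝ (Fin d))) = ⊤ := by
      rw [← direction_affineSpan, hsp]; exact AffineSubspace.direction_top ℝ _ _
    have ha : p.1 = 0 := by
      have horth : ∀ v ∈ vectorSpan ℝ (↑T : Set (EuclideanSpace ℝ (Fin d))), ⟪p.1, v⟫ = 0 := by
        intro v hv
        induction hv using Submodule.span_induction with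
        | mem x hx =>
            obtain ⟨t₁, ht₁, t₂, ht₂, rfl⟩ := hx
            have h1 := hzero t₁ ht₁
            have h2 := hzero t₂ ht₂
            have : ⟪p.1, t₁⟫ = ⟪p.1, t₂⟫ := by
              simp only [evL, LinearMap.coe_mk, AddHom.coe_mk] at h1 h2; linarith
            simp [vsub_eq_sub, inner_sub_right, this]
        | zero => simp
        | add x y _ _ hx hy => simp [inner_add_right, hx, hy]
        | smul c x _ hx => simp [inner_smul_right, hx]
      have : ⟪p.1, p.1⟫ = 0 := horth p.1 (hvs ▸ Submodule.mem_top)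
      exact inner_self_eq_zero.mp this
    obtain ⟨t, ht⟩ := hTne
    have hb : p.2 = 0 := by
      have := hzero t ht
      simp only [evL, LinearMap.coe_mk, AddHom.coe_mk, ha] at this
      simpa using this
    exact Prod.ext ha hb
  set e := LinearEquiv.ofInjective Φ hinj with he
  set K : ℝ := ‖LinearMap.toContinuousLinearMap e.symm.toLinearMap‖ with hK
  have hK0 : 0 ≤ K := ContinuousLinearMap.opNorm_nonneg _
  refine ⟨1/(2*(K+1)), by positivity, fun _ p hp => ?_⟩
  by_contra hcon
  push_neg at hcon
  have hΦnorm : ‖Φ p‖ ≤ 1/(2*(K+1)) := by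
    rw [pi_norm_le_iff_of_nonneg (by positivity)]
    intro t
    exact le_of_lt (by simpa [hΦ] using hcon t t.2)
  have hpe : e.symm (e p) = p := e.symm_apply_apply p
  have hnorm' : ‖p‖ ≤ K * ‖Φ p‖ := by
    calc ‖p‖ = ‖LinearMap.toContinuousLinearMap e.symm.toLinearMap (e p)‖ := by
          simp [hpe]
      _ ≤ K * ‖e p‖ := (LinearMap.toContinuousLinearMap e.symm.toLinearMap).le_opNorm _
      _ = K * ‖Φ p‖ := by
          congr 1
  have h1 : (1:ℝ) ≤ ‖p‖ := by
    calc (1:ℝ) = ‖p.1‖ := hp.symm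
      _ ≤ ‖p‖ := norm_fst_le p
  have : (1:ℝ) ≤ K * (1/(2*(K+1))) := by
    calc (1:ℝ) ≤ ‖p‖ := h1
      _ ≤ K * ‖Φ p‖ := hnorm'
      _ ≤ K * (1/(2*(K+1))) := mul_le_mul_of_nonneg_left hΦnorm hK0
  have hlt : K * (1/(2*(K+1))) < 1 := by
    have heq : K * (1/(2*(K+1))) = K/(2*(K+1)) := by ring
    rw [heq, div_lt_one (by positivity)]
    linarith
  linarith

-- hyperplane through non-spanning T
lemma exists_hyp {d : ℕ} (hd : 1 ≤ d) (T : Finset (EuclideanSpace ℝ (Fin d)))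
    (hT : affineSpan ℝ (↑T : Set (EuclideanSpace ℝ (Fin d))) ≠ ⊤) :
    ∃ w : EuclideanSpace ℝ (Fin d) × ℝ, w.1 ≠ 0 ∧ ∀ t ∈ T, evL t w = 0 := by
  classical
  haveI := nontrivialE hd
  rcases T.eq_empty_or_nonempty with h | ⟨p₀, hp₀⟩
  · obtain ⟨u, hu⟩ := exists_ne (0 : EuclideanSpace ℝ (Fin d))
    exact ⟨(u, 0), hu, by simp [h]⟩
  · set V := vectorSpan ℝ (↑T : Set (EuclideanSpace ℝ (Fin d))) with hV
    have hVne : V ≠ ⊤ := by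
      intro h
      apply hT
      rw [← AffineSubspace.direction_eq_top_iff_of_nonempty
        ((affineSpan_nonempty ℝ).2 ⟨p₀, by exact_mod_cast hp₀⟩)]
      rw [direction_affineSpan]; exact h
    have hVorth : Vᗮ ≠ ⊥ := fun h => hVne (Submodule.orthogonal_eq_bot_iff.mp h)
    obtain ⟨u, huV, hu0⟩ := (Submodule.ne_bot_iff _).mp hVorth
    refine ⟨(u, -⟪u, p₀⟫), hu0, fun t ht => ?_⟩
    have hmem : t -ᵥ p₀ ∈ V := vsub_mem_vectorSpan ℝ (by exact_mod_cast ht) (by exact_mod_cast hp₀)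
    have : ⟪u, t - p₀⟫ = 0 := by
      have := (Submodule.mem_orthogonal V u).mp huV (t -ᵥ p₀) hmem
      rw [real_inner_comm] at this
      simpa [vsub_eq_sub] using this
    simp only [evL, LinearMap.coe_mk, AddHom.coe_mk]
    rw [inner_sub_right] at this
    linarith

lemma main_unit {d : ℕ} (hd : 1 ≤ d) (S : Finset (EuclideanSpace ℝ (Fin d))) :
    ∃ δ : ℝ, 0 < δ ∧ ∀ p : EuclideanSpace ℝ (Fin d) × ℝ, ‖p.1‖ = 1 →
      ∃ q : EuclideanSpace ℝ (Fin d) × ℝ, q.1 ≠ 0 ∧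
        (∀ s ∈ S, |evL s p| ≤ δ → evL s q = 0) ∧
        (∀ s ∈ S, 0 ≤ evL s p * evL s q) := by
  classical
  rcases S.eq_empty_or_nonempty with hS | hS
  · refine ⟨1, one_pos, fun p hp => ⟨p, ?_, by simp [hS], by simp [hS]⟩⟩
    intro h; rw [h] at hp; simp at hp
  -- constants
  have hpow : ∀ T : Finset (EuclideanSpace ℝ (Fin d)), T ∈ S.powerset ↔ T ⊆ S := by
    intro T; exact Finset.mem_powerset
  have hPne : (S.powerset).Nonempty := ⟨∅, by simp⟩
  choose Cf hCf1 hCf2 using fun T => interp S T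
  choose εf hεf1 hεf2 using fun T => spanning_bound hd T
  set Cmax : ℝ := S.powerset.sup' hPne Cf with hCmax
  have hCmax1 : 1 ≤ Cmax := le_trans (hCf1 ∅) (Finset.le_sup' Cf (by simp))
  have hCmaxle : ∀ T ⊆ S, Cf T ≤ Cmax := fun T hT => Finset.le_sup' Cf ((hpow T).2 hT)
  set m : ℝ := S.powerset.inf' hPne εf with hm
  have hm0 : 0 < m := (Finset.lt_inf'_iff hPne).2 fun T _ => hεf1 T
  have hmle : ∀ T ⊆ S, m ≤ εf T := fun T hT => Finset.inf'_le εf ((hpow T).2 hT)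
  set dk : ℕ → ℝ := fun k => m/2 * (1/(2*Cmax))^k with hdk
  have hdkpos : ∀ k, 0 < dk k := by
    intro k; apply mul_pos (by linarith); positivity
  have hbase0 : (0:ℝ) ≤ 1/(2*Cmax) := by positivity
  have hbase1 : 1/(2*Cmax) ≤ 1 := by
    rw [div_le_one (by linarith)]; linarith
  have hdkanti : ∀ i j, i ≤ j → dk j ≤ dk i := by
    intro i j hij
    apply mul_le_mul_of_nonneg_left (pow_le_pow_of_le_one hbase0 hbase1 hij) (by linarith)
  have hdksucc : ∀ k, Cmax * dk (k+1) = dk k / 2 := by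
    intro k
    simp only [hdk, pow_succ]
    field_simp
  set n := S.card with hn
  refine ⟨dk (n+1), hdkpos _, fun p hp => ?_⟩
  set Tk : ℕ → Finset (EuclideanSpace ℝ (Fin d)) :=
    fun k => S.filter (fun s => |evL s p| ≤ dk k) with hTk
  have hTksub : ∀ i j, i ≤ j → Tk j ⊆ Tk i := by
    intro i j hij x hx
    rw [hTk, Finset.mem_filter] at hx ⊢
    exact ⟨hx.1, le_trans hx.2 (hdkanti i j hij)⟩
  -- pigeonhole
  have hpig : ∃ k ≤ n, (Tk k).card = (Tk (k+1)).card := by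
    by_contra hcon
    push_neg at hcon
    have hlt : ∀ k ≤ n, (Tk (k+1)).card < (Tk k).card := by
      intro k hk
      exact lt_of_le_of_ne (Finset.card_le_card (hTksub k (k+1) (by omega)))
        (fun h => hcon k hk h.symm)
    have key : ∀ k, k ≤ n + 1 → (Tk k).card + k ≤ n := by
      intro k
      induction k with
      | zero =>
          intro _
          simpa using Finset.card_le_card (Finset.filter_subset _ S)
      | succ k ih =>
          intro h
          have h1 := hlt k (by omega)
          have h2 := ih (by omega)
          omega
    have := key (n+1) (le_refl _)
    omega
  obtain ⟨k, hkn, hkcard⟩ := hpig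
  set T := Tk (k+1) with hT
  have hTeq : Tk k = T := (Finset.eq_of_subset_of_card_le (hTksub k (k+1) (by omega)) hkcard.le).symm
  have hTsubS : T ⊆ S := Finset.filter_subset _ S
  have hTmem : ∀ s ∈ S, |evL s p| ≤ dk (k+1) → s ∈ T := by
    intro s hs h; rw [hT, hTk]; exact Finset.mem_filter.2 ⟨hs, h⟩
  have hTbig : ∀ s ∈ S, s ∉ T → dk k < |evL s p| := by
    intro s hs hsT
    by_contra h
    push_neg at h
    exact hsT (hTeq ▸ Finset.mem_filter.2 ⟨hs, h⟩)
  have hTval : ∀ t ∈ T, |evL t p| ≤ dk (k+1) := fun t ht => (Finset.mem_filter.1 ht).2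
  -- T is not spanning
  have hspan : affineSpan ℝ (↑T : Set (EuclideanSpace ℝ (Fin d))) ≠ ⊤ := by
    intro hsp
    obtain ⟨t, ht, hε⟩ := hεf2 T hsp p hp
    have h1 : |evL t p| ≤ dk (k+1) := hTval t ht
    have h2 : dk (k+1) ≤ dk 0 := hdkanti 0 (k+1) (by omega)
    have h3 : dk 0 = m/2 := by simp [hdk]
    have h4 : m ≤ εf T := hmle T hTsubS
    linarith
  obtain ⟨w, hw1, hw0⟩ := exists_hyp hd T hspan
  obtain ⟨q0, hq0T, hq0b⟩ := hCf2 T (dk (k+1)) (le_of_lt (hdkpos _)) p hTval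
  have hq0bound : ∀ s ∈ S, |evL s q0| ≤ dk k / 2 := by
    intro s hs
    calc |evL s q0| ≤ Cf T * dk (k+1) := hq0b s hs
      _ ≤ Cmax * dk (k+1) := mul_le_mul_of_nonneg_right (hCmaxle T hTsubS) (le_of_lt (hdkpos _))
      _ = dk k / 2 := hdksucc k
  -- bound on w over S
  set B : ℝ := 1 + S.sup' hS (fun s => |evL s w|) with hB
  have hB1 : 1 ≤ B := by
    obtain ⟨s, hs⟩ := id hS
    have h1 : |evL s w| ≤ S.sup' hS (fun s => |evL s w|) := Finset.le_sup' (fun s => |evL s w|) hs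
    have h2 : (0:ℝ) ≤ |evL s w| := abs_nonneg _
    simp only [hB]; linarith
  have hBle : ∀ s ∈ S, |evL s w| ≤ B := by
    intro s hs
    have := Finset.le_sup' (fun s => |evL s w|) hs
    simp only [hB]; linarith
  set τ : ℝ := dk k / (4*B) with hτ
  have hτ0 : 0 < τ := by apply div_pos (hdkpos _); linarith
  -- choose τ' so linear part nonzero
  have hτ' : ∃ τ' : ℝ, 0 < τ' ∧ τ' ≤ τ ∧ p.1 - q0.1 + τ' • w.1 ≠ 0 := by
    by_cases hz : p.1 - q0.1 + τ • w.1 = 0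
    · refine ⟨τ/2, by linarith, by linarith, fun h => ?_⟩
      have : (τ - τ/2) • w.1 = 0 := by
        have := sub_eq_zero.2 (hz.trans h.symm)
        rw [← this]; module
      have h2 : τ - τ/2 ≠ 0 := by linarith
      exact hw1 ((smul_eq_zero.1 this).resolve_left h2)
    · exact ⟨τ, hτ0, le_refl _, hz⟩
  obtain ⟨τ', hτ'0, hτ'le, hτ'ne⟩ := hτ'
  set q : EuclideanSpace ℝ (Fin d) × ℝ := p - q0 + τ' • w with hq
  have hq1 : q.1 = p.1 - q0.1 + τ' • w.1 := rfl
  have hqeval : ∀ s : EuclideanSpace ℝ (Fin d), evL s q = evL s p - evL s q0 + τ' * evL s w := by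
    intro s; rw [hq]; simp
  clear_value B τ q
  refine ⟨q, hq1 ▸ hτ'ne, ?_, ?_⟩
  · intro s hs hsd
    have hsT : s ∈ T := hTmem s hs (le_trans hsd (hdkanti (k+1) (n+1) (by omega)))
    rw [hqeval, hq0T s hsT, hw0 s hsT]
    ring
  · intro s hs
    by_cases hsT : s ∈ T
    · rw [hqeval, hq0T s hsT, hw0 s hsT]
      simp [mul_comm]
    · have hbig := hTbig s hs hsT
      have hdiff : |evL s q - evL s p| < dk k := by
        rw [hqeval]
        have h1 : |evL s p - evL s q0 + τ' * evL s w - evL s p| ≤ |evL s q0| + τ' * |evL s w| := by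
          calc |evL s p - evL s q0 + τ' * evL s w - evL s p| = |(-(evL s q0)) + τ' * evL s w| := by
                ring_nf
            _ ≤ |(-(evL s q0))| + |τ' * evL s w| := abs_add_le _ _
            _ = |evL s q0| + τ' * |evL s w| := by
                rw [abs_neg, abs_mul, abs_of_pos hτ'0]
        have h2 : τ' * |evL s w| ≤ τ * B :=
          mul_le_mul hτ'le (hBle s hs) (abs_nonneg _) (le_of_lt hτ0)
        have h3 : τ * B = dk k / 4 := by
          rw [hτ]; field_simp
        have h4 := hq0bound s hs
        have h5 := hdkpos k
        have h6 : |evL s p - evL s q0 + τ' * evL s w - evL s p| ≤ dk k / 2 + dk k / 4 := by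
          linarith
        linarith
      set x := evL s p
      set y := evL s q
      have hxy : |y - x| < |x| := lt_trans hdiff hbig
      rcases le_or_gt 0 x with hx | hx
      · have : y > 0 := by
          rw [abs_of_nonneg hx] at hxy
          have := (abs_lt.1 hxy).1
          linarith
        positivity
      · have hy : y < 0 := by
          rw [abs_of_neg hx] at hxy
          have := (abs_lt.1 hxy).2
          linarith
        exact le_of_lt (mul_pos_of_neg_of_neg hx hy)

/-- Sharpening lemma: for any finite set of sites in `ℝ^d` there is a `δ > 0`
such that every hyperplane `{x | ⟪a, x⟫ + b = 0}` can be replaced by a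
combinatorially equivalent hyperplane incident to all sites within distance
`δ` of it. -/
theorem hyperplane_sharpening
    (d : ℕ) (hd : 1 ≤ d) (S : Finset (EuclideanSpace ℝ (Fin d))) :
    ∃ δ : ℝ, 0 < δ ∧
      ∀ (a : EuclideanSpace ℝ (Fin d)) (b : ℝ), a ≠ 0 →
        ∃ (a' : EuclideanSpace ℝ (Fin d)) (b' : ℝ), a' ≠ 0 ∧
          (∀ s ∈ S, Metric.infDist s {x : EuclideanSpace ℝ (Fin d) | ⟪a, x⟫ + b = 0} ≤ δ →
            ⟪a', s⟫ + b' = 0) ∧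
          (∀ s ∈ S, 0 ≤ (⟪a, s⟫ + b) * (⟪a', s⟫ + b')) := by
  obtain ⟨δ, hδ0, hδ⟩ := main_unit hd S
  refine ⟨δ, hδ0, fun a b ha => ?_⟩
  have hna : (0:ℝ) < ‖a‖ := norm_pos_iff.2 ha
  set p : EuclideanSpace ℝ (Fin d) × ℝ := (‖a‖⁻¹ • a, ‖a‖⁻¹ * b) with hp
  have hp1 : ‖p.1‖ = 1 := by
    rw [hp]
    simp [norm_smul, abs_of_pos (inv_pos.2 hna), inv_mul_cancel₀ (ne_of_gt hna)]
  obtain ⟨q, hq1, hqi, hqii⟩ := hδ p hp1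
  have hevp : ∀ s : EuclideanSpace ℝ (Fin d), evL s p = ‖a‖⁻¹ * (⟪a, s⟫ + b) := by
    intro s
    rw [evL_apply', hp]
    simp [real_inner_smul_left, Finset.mul_sum, mul_assoc, mul_add]
  -- the hyperplane is nonempty
  have hne : ({x : EuclideanSpace ℝ (Fin d) | ⟪a, x⟫ + b = 0}).Nonempty := by
    refine ⟨(-b / ‖a‖^2) • a, ?_⟩
    simp only [Set.mem_setOf_eq, real_inner_smul_right]
    rw [real_inner_self_eq_norm_sq]
    field_simp
    ring
  refine ⟨q.1, q.2, hq1, ?_, ?_⟩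
  · intro s hs hdist
    have hkey : |evL s p| ≤ δ := by
      by_contra hcon
      push_neg at hcon
      have hlt : Metric.infDist s {x : EuclideanSpace ℝ (Fin d) | ⟪a, x⟫ + b = 0} < |evL s p| :=
        lt_of_le_of_lt hdist hcon
      obtain ⟨y, hy, hdy⟩ := (Metric.infDist_lt_iff hne).1 hlt
      have hy0 : ⟪a, y⟫ + b = 0 := hy
      have : |evL s p| ≤ dist s y := by
        rw [hevp]
        have heq : ⟪a, s⟫ + b = ⟪a, s - y⟫ := by
          rw [inner_sub_right]; linarith
        rw [heq, abs_mul, abs_of_pos (inv_pos.2 hna)]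
        calc ‖a‖⁻¹ * |⟪a, s - y⟫| ≤ ‖a‖⁻¹ * (‖a‖ * ‖s - y‖) := by
              exact mul_le_mul_of_nonneg_left (abs_real_inner_le_norm a (s-y)) (le_of_lt (inv_pos.2 hna))
          _ = ‖s - y‖ := by field_simp
          _ = dist s y := (dist_eq_norm s y).symm
      linarith
    have := hqi s hs hkey
    rw [evL_apply'] at this
    exact this
  · intro s hs
    have h := hqii s hs
    have heq : (⟪a, s⟫ + b) * (⟪q.1, s⟫ + q.2) = ‖a‖ * (evL s p * evL s q) := by
      rw [hevp, evL_apply']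
      field_simp
    rw [heq]
    exact mul_nonneg (le_of_lt hna) h
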